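/- Counterexample to interpolation without the non-vanishing condition: let g ∈ L¹(Ω,σ) with g ∉ L^p(Ω,σ) for every p > 1, and define Φ_λ(x) = ((1−λ)/(1+λ))·g(x) for Re λ > 0. Then {Φ_λ} is an analytic family, ‖Φ₁‖_∞ = 0, sup_{Re λ>0}‖Φ_λ‖₁ ≤ ‖g‖₁ < ∞, yet for 0 < θ < 1 the interpolated norm ‖Φ_θ‖_{p_θ} with 1/p_θ = 1−θ is infinite (since Φ_θ is a nonzero multiple of g and p_θ > 1). -/

import Mathlib

open MeasureTheory Complex Set
open scoped ENNReal

lemma aux_smul_eq (c : ℂ) (g : α → ℂ) :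
    (fun x => c * g x) = c • g := by
  funext x; simp [smul_eq_mul]

/-- Counterexample to interpolation without the non-vanishing condition: for
`g ∈ L¹ \ ⋃_{p>1} L^p`, the family `Φ_λ = ((1−λ)/(1+λ))·g` is analytic on the right
half-plane, `‖Φ₁‖_∞ = 0`, `‖Φ_λ‖₁ ≤ ‖g‖₁ < ∞`, yet for each `0 < θ < 1` the
interpolated norm `‖Φ_θ‖_{p_θ}` with `1/p_θ = 1−θ` (i.e. `p_θ = 1/(1−θ) > 1`)
is infinite. -/
theorem interpolation_counterexample_vanishing
    {α : Type*} [MeasurableSpace α] (μ : Measure α)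
    (g : α → ℂ) (hg : MemLp g 1 μ)
    (hgnot : ∀ p : ℝ≥0∞, 1 < p → ¬ MemLp g p μ) :
    (∀ x : α, DifferentiableOn ℂ (fun l : ℂ => ((1 - l) / (1 + l)) * g x)
      {l : ℂ | 0 < l.re}) ∧
    eLpNorm (fun x => ((1 - (1 : ℂ)) / (1 + (1 : ℂ))) * g x) ⊤ μ = 0 ∧
    (∀ l : ℂ, 0 < l.re →
      eLpNorm (fun x => ((1 - l) / (1 + l)) * g x) 1 μ ≤ eLpNorm g 1 μ) ∧
    eLpNorm g 1 μ < ⊤ ∧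
    (∀ θ : ℝ, 0 < θ → θ < 1 →
      eLpNorm (fun x => ((1 - (θ : ℂ)) / (1 + (θ : ℂ))) * g x)
        (ENNReal.ofReal (1 / (1 - θ))) μ = ⊤) := by
  refine ⟨?_, ?_, ?_, hg.2, ?_⟩
  · intro x
    apply DifferentiableOn.mul _ (differentiableOn_const _)
    apply DifferentiableOn.div
    · exact (differentiable_const _).sub differentiable_id |>.differentiableOn
    · exact (differentiable_const _).add differentiable_id |>.differentiableOn
    · intro l hl
      intro h
      have : (1 + l).re = 0 := by rw [h]; simp
      simp at this
      simp only [mem_setOf_eq] at hl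
      linarith
  · have h0 : (fun x : α => ((1 - (1 : ℂ)) / (1 + (1 : ℂ))) * g x) = (fun _ => (0:ℂ)) := by
      funext x; simp
    rw [h0]
    exact eLpNorm_zero
  · intro l hl
    rw [aux_smul_eq, eLpNorm_const_smul]
    have hle : ‖(1 - l) / (1 + l)‖₊ ≤ 1 := by
      rw [← NNReal.coe_le_coe]
      simp only [coe_nnnorm, norm_div, NNReal.coe_one]
      have h1 : (0:ℝ) < ‖(1 : ℂ) + l‖ := by
        have hre : (0:ℝ) < (1 + l).re := by simp; linarith
        calc (0:ℝ) < (1 + l).re := hre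
          _ ≤ |(1 + l).re| := le_abs_self _
          _ ≤ ‖1 + l‖ := Complex.abs_re_le_norm _
      rw [div_le_one h1]
      have e1 : ‖(1 : ℂ) - l‖ ^ 2 ≤ ‖(1 : ℂ) + l‖ ^ 2 := by
        rw [Complex.sq_norm, Complex.sq_norm]
        simp [Complex.normSq_apply]
        nlinarith [hl]
      nlinarith [norm_nonneg ((1 : ℂ) - l)]

    refine mul_le_of_le_one_left zero_le ?_
    rw [enorm_eq_nnnorm]
    exact_mod_cast hle
  · intro θ hθ0 hθ1
    by_contra h
    set c : ℂ := (1 - (θ : ℂ)) / (1 + (θ : ℂ)) with hc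
    have hcne : c ≠ 0 := by
      apply div_ne_zero
      · intro h'
        have : (1 - (θ : ℂ)).re = 0 := by rw [h']; simp
        simp at this; linarith
      · intro h'
        have : (1 + (θ : ℂ)).re = 0 := by rw [h']; simp
        simp at this; linarith
    set p : ℝ≥0∞ := ENNReal.ofReal (1 / (1 - θ)) with hp
    have hp1 : 1 < p := by
      rw [hp]
      rw [show (1 : ℝ≥0∞) = ENNReal.ofReal 1 by simp]
      rw [ENNReal.ofReal_lt_ofReal_iff (div_pos one_pos (by linarith))]
      rw [lt_div_iff₀ (by linarith)]
      linarith
    have hmem : MemLp (fun x => c * g x) p μ := by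
      constructor
      · exact (hg.1.const_smul c)
      · exact lt_of_le_of_ne le_top h
    have : MemLp g p μ := by
      have := hmem.const_smul c⁻¹
      convert this using 1
      funext x
      simp [smul_eq_mul, ← mul_assoc, inv_mul_cancel₀ hcne]
    exact hgnot p hp1 this
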